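/- Let X have a distribution symmetric about μ with variance σ² > 0, and let μ − σ ≤ t < μ. Then E[X | X ≥ t] ≤ μ + σ, provided P(X ≥ t) > 0. Moreover, the symmetric two-point distribution (1/2)δ_{μ−σ} + (1/2)δ_{μ+σ} attains this bound with equality. -/

import Mathlib

open MeasureTheory
open scoped ENNReal

theorem stmt6 (P : Measure ℝ) [IsProbabilityMeasure P] (m s t : ℝ)
    (hsym : P.map (fun x => 2 * m - x) = P)
    (hX : Integrable (fun x => x) P) (hX2 : Integrable (fun x => x ^ 2) P)
    (hmean : ∫ x, x ∂P = m) (hvar : ∫ x, (x - m) ^ 2 ∂P = s ^ 2)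
    (hs : 0 < s) (ht1 : m - s ≤ t) (ht2 : t < m)
    (hpos : 0 < (P {x : ℝ | t ≤ x}).toReal) :
    ((∫ x in {x : ℝ | t ≤ x}, x ∂P) / (P {x : ℝ | t ≤ x}).toReal ≤ m + s) ∧
      (let Q : Measure ℝ :=
        (1 / 2 : ℝ≥0∞) • Measure.dirac (m - s) + (1 / 2 : ℝ≥0∞) • Measure.dirac (m + s)
       m - s < t →
         (∫ x in {x : ℝ | t ≤ x}, x ∂Q) / (Q {x : ℝ | t ≤ x}).toReal = m + s) := by
  have hA : MeasurableSet {x : ℝ | t ≤ x} := measurableSet_le measurable_const measurable_id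
  constructor
  · -- main inequality
    set u := 2 * m - t with hu
    have hT : Measurable (fun x : ℝ => 2 * m - x) := measurable_const.sub measurable_id
    have hSl : MeasurableSet {x : ℝ | x < t} := measurableSet_lt measurable_id measurable_const
    have hSr : MeasurableSet {x : ℝ | u < x} := measurableSet_lt measurable_const measurable_id
    -- symmetry for set integrals
    have key : ∀ f : ℝ → ℝ, Measurable f →
        ∫ x in {x : ℝ | x < t}, f x ∂P = ∫ x in {x : ℝ | u < x}, f (2 * m - x) ∂P := by
      intro f hf
      rw [← integral_indicator hSl, ← integral_indicator hSr]
      conv_lhs => rw [← hsym]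
      rw [integral_map hT.aemeasurable (hf.indicator hSl).aestronglyMeasurable]
      congr 1; ext x
      by_cases hx : u < x
      · have h1 : 2 * m - x < t := by simp only [hu] at hx; linarith
        simp [Set.indicator, h1, hx]
      · have h1 : ¬ (2 * m - x < t) := by simp only [hu, not_lt] at hx ⊢; linarith
        simp [Set.indicator, h1, hx]
    -- symmetry for measures
    have hq : P {x : ℝ | x < t} = P {x : ℝ | u < x} := by
      conv_lhs => rw [← hsym]
      rw [Measure.map_apply hT hSl]
      congr 1
      ext x
      simp only [Set.mem_preimage, Set.mem_setOf_eq, hu]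
      constructor <;> intro h <;> linarith
    -- integrability
    have hXm : Integrable (fun x : ℝ => x - m) P := hX.sub (integrable_const m)
    have hXm2 : Integrable (fun x : ℝ => (x - m) ^ 2) P := by
      have h : (fun x : ℝ => (x - m) ^ 2) = fun x => x ^ 2 - 2 * m * x + m ^ 2 := by
        funext x; ring
      rw [h]
      exact (hX2.sub (hX.const_mul (2 * m))).add (integrable_const _)
    have hconst : ∀ (S : Set ℝ) (c : ℝ), IntegrableOn (fun _ : ℝ => c) S P :=
      fun S c => integrableOn_const (measure_ne_top _ _)
    -- notation
    set qR := (P {x : ℝ | x < t}).toReal with hqR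
    have hqr' : (P {x : ℝ | u < x}).toReal = qR := by rw [hqR, hq]
    have hq0 : 0 ≤ qR := ENNReal.toReal_nonneg
    -- complement : p = 1 - q
    have hcompl : (P {x : ℝ | t ≤ x}).toReal + qR = 1 := by
      have h1 : {x : ℝ | x < t} = {x : ℝ | t ≤ x}ᶜ := by ext x; simp [not_le]
      have h2 : P {x : ℝ | t ≤ x} + P {x : ℝ | x < t} = 1 := by
        rw [h1, measure_add_measure_compl hA]; exact measure_univ
      rw [hqR, ← ENNReal.toReal_add (measure_ne_top _ _) (measure_ne_top _ _), h2]
      simp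
    -- q ≤ 1/2
    have hdisj : Disjoint {x : ℝ | x < t} {x : ℝ | u < x} := by
      rw [Set.disjoint_left]
      intro x hx hx'
      simp only [Set.mem_setOf_eq, hu] at hx hx'
      linarith
    have hhalf : qR + qR ≤ 1 := by
      have h1 : P {x : ℝ | x < t} + P {x : ℝ | u < x} ≤ 1 := by
        rw [← measure_union hdisj hSr]
        exact prob_le_one
      have h2 := ENNReal.toReal_mono ENNReal.one_ne_top h1
      rw [ENNReal.toReal_add (measure_ne_top _ _) (measure_ne_top _ _)] at h2
      simpa [hqr'] using h2
    -- variance bound : 2V ≤ s^2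
    set V := ∫ x in {x : ℝ | u < x}, (x - m) ^ 2 ∂P with hV
    have hVbound : V + V ≤ s ^ 2 := by
      have h1 : ∫ x in {x : ℝ | x < t} ∪ {x : ℝ | u < x}, (x - m) ^ 2 ∂P ≤ s ^ 2 := by
        rw [← hvar]
        exact setIntegral_le_integral hXm2 (Filter.Eventually.of_forall fun x => sq_nonneg _)
      rw [setIntegral_union hdisj hSr hXm2.integrableOn hXm2.integrableOn] at h1
      have h2 : ∫ x in {x : ℝ | x < t}, (x - m) ^ 2 ∂P = V := by
        rw [key (fun x => (x - m) ^ 2) ((measurable_id.sub measurable_const).pow_const 2), hV]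
        exact setIntegral_congr_fun hSr (fun x _ => by ring)
      linarith
    -- J bound
    set J := ∫ x in {x : ℝ | u < x}, (x - m) ∂P with hJ
    have hJbound : J ≤ V / (2 * s) + s / 2 * qR := by
      have h2s : (0 : ℝ) < 2 * s := by linarith
      have hmono : J ≤ ∫ x in {x : ℝ | u < x}, ((x - m) ^ 2 / (2 * s) + s / 2) ∂P := by
        apply setIntegral_mono_on hXm.integrableOn
          ((hXm2.div_const (2 * s)).add (integrable_const _)).integrableOn hSr
        intro x _
        show x - m ≤ (x - m) ^ 2 / (2 * s) + s / 2
        rw [div_add' _ _ _ (ne_of_gt h2s), le_div_iff₀ h2s]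
        nlinarith [sq_nonneg (x - m - s)]
      have heq : ∫ x in {x : ℝ | u < x}, ((x - m) ^ 2 / (2 * s) + s / 2) ∂P
          = V / (2 * s) + s / 2 * qR := by
        rw [integral_add ((hXm2.div_const (2 * s)).integrableOn) (hconst _ _),
          integral_div, setIntegral_const, measureReal_def, hqr', smul_eq_mul]
        ring
      linarith [heq ▸ hmono]
    -- compute ∫_A x
    have hIA : ∫ x in {x : ℝ | t ≤ x}, x ∂P = m - m * qR + J := by
      have h1 : (∫ x in {x : ℝ | t ≤ x}, x ∂P) + ∫ x in {x : ℝ | x < t}, x ∂P = m := by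
        have hc : {x : ℝ | t ≤ x}ᶜ = {x : ℝ | x < t} := by ext x; simp [not_le]
        rw [← hmean, ← integral_add_compl hA hX, hc]
      have h2 : ∫ x in {x : ℝ | x < t}, x ∂P = 2 * m * qR - ∫ x in {x : ℝ | u < x}, x ∂P := by
        rw [key (fun x => x) measurable_id]
        rw [show (fun x : ℝ => 2 * m - x) = fun x : ℝ => (2 * m : ℝ) - x from rfl]
        rw [integral_sub (hconst _ _) hX.integrableOn, setIntegral_const, measureReal_def, hqr', smul_eq_mul]
        ring
      have h3 : ∫ x in {x : ℝ | u < x}, x ∂P = J + m * qR := by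
        rw [hJ, integral_sub hX.integrableOn (hconst _ _), setIntegral_const, measureReal_def, hqr', smul_eq_mul]
        ring
      rw [h2, h3] at h1
      linarith
    -- conclude
    rw [div_le_iff₀ hpos, hIA]
    have hVd : V / (2 * s) ≤ s / 4 := by
      rw [div_le_iff₀ (by linarith : (0:ℝ) < 2 * s)]
      nlinarith
    have hp : (P {x : ℝ | t ≤ x}).toReal = 1 - qR := by linarith
    rw [hp]
    nlinarith [mul_le_mul_of_nonneg_left hhalf hs.le]
  · -- the two-point distribution attains the bound
    intro Q hlt
    have hmem1 : (m - s) ∉ {x : ℝ | t ≤ x} := by simp only [Set.mem_setOf_eq, not_le]; linarith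
    have hmem2 : (m + s) ∈ {x : ℝ | t ≤ x} := by simp only [Set.mem_setOf_eq]; linarith
    have hQA : Q {x : ℝ | t ≤ x} = 1 / 2 := by
      show ((1 / 2 : ℝ≥0∞) • Measure.dirac (m - s)
          + (1 / 2 : ℝ≥0∞) • Measure.dirac (m + s)) {x : ℝ | t ≤ x} = 1 / 2
      rw [Measure.add_apply, Measure.smul_apply, Measure.smul_apply,
        Measure.dirac_apply' _ hA, Measure.dirac_apply' _ hA,
        Set.indicator_of_notMem hmem1, Set.indicator_of_mem hmem2]
      simp
    have hrestr : Q.restrict {x : ℝ | t ≤ x} = (1 / 2 : ℝ≥0∞) • Measure.dirac (m + s) := by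
      show ((1 / 2 : ℝ≥0∞) • Measure.dirac (m - s)
          + (1 / 2 : ℝ≥0∞) • Measure.dirac (m + s)).restrict {x : ℝ | t ≤ x} = _
      rw [Measure.restrict_add, Measure.restrict_smul, Measure.restrict_smul]
      classical
      rw [restrict_dirac, restrict_dirac]
      rw [if_neg hmem1, if_pos hmem2]
      simp
    have hint : ∫ x in {x : ℝ | t ≤ x}, x ∂Q = (m + s) / 2 := by
      rw [hrestr, integral_smul_measure, integral_dirac, smul_eq_mul]
      rw [show ((1:ℝ≥0∞)/2).toReal = (1:ℝ)/2 by simp [ENNReal.toReal_div]]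
      ring
    rw [hint, hQA]
    rw [show ((1:ℝ≥0∞)/2).toReal = (1:ℝ)/2 by simp [ENNReal.toReal_div]]
    ring
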